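/- Let Π be a program of forward-propagating rules whose rules have radius at most ρ, F a set of facts, and α a temporal fact with time argument τ. Let B be the rigid facts in F, let H be the set of temporal facts entailed by Π ∪ B ∪ F|[0,τ) with time argument in [τ−ρ, τ), and let U = F|τ (the temporal facts of F at time τ). Then Π ∪ F entails α if and only if Π ∪ B ∪ H ∪ U entails α. -/

import Mathlib

/-- A fact is either rigid (no time argument) or temporal (with a natural-number time). -/
inductive TFact (A : Type) where
  | rigid (p : A)
  | temporal (p : A) (t : ℕ)

/-- The predicate of a fact. -/
def TFact.pred {A : Type} : TFact A → A
  | .rigid p => p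
  | .temporal p _ => p

/-- A forward-propagating rule with a rigid head: all body atoms are rigid. -/
structure RigidRule (A : Type) where
  head : A
  body : List A

/-- A forward-propagating rule with temporal head `headPred` at time `t`:
temporal body atoms are at times `t - k` for offsets `k`, rigid body atoms as given.
Rules mention no concrete time points: they are instantiated at every admissible `t`. -/
structure FPRule (A : Type) where
  headPred : A
  tempBody : List (A × ℕ)
  rigidBody : List A

/-- Entailment (existence of a hyper-resolution derivation) from a program of
forward-propagating rules `(Pr, Pt)` together with a set of facts `F`. -/
inductive Entails {A : Type} (Pr : Set (RigidRule A)) (Pt : Set (FPRule A))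
    (F : Set (TFact A)) : TFact A → Prop where
  | fact {α : TFact A} : α ∈ F → Entails Pr Pt F α
  | rigid {r : RigidRule A} : r ∈ Pr →
      (∀ b ∈ r.body, Entails Pr Pt F (.rigid b)) →
      Entails Pr Pt F (.rigid r.head)
  | temp {r : FPRule A} (t : ℕ) : r ∈ Pt →
      (∀ p ∈ r.tempBody, p.2 ≤ t) →
      (∀ p ∈ r.tempBody, Entails Pr Pt F (.temporal p.1 (t - p.2))) →
      (∀ b ∈ r.rigidBody, Entails Pr Pt F (.rigid b)) →
      Entails Pr Pt F (.temporal r.headPred t)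

section Aux
variable {A : Type} {Pr : Set (RigidRule A)} {Pt : Set (FPRule A)}

/-- Cut: if every fact of `G` is entailed from `F`, then entailment from `G`
implies entailment from `F`. -/
lemma Entails.cut {F G : Set (TFact A)} (h : ∀ γ ∈ G, Entails Pr Pt F γ) :
    ∀ {β}, Entails Pr Pt G β → Entails Pr Pt F β := by
  intro β hβ
  induction hβ with
  | fact hm => exact h _ hm
  | rigid hr _ ih => exact Entails.rigid hr ih
  | temp t hr hle _ _ iht ihr => exact Entails.temp t hr hle iht ihr

lemma Entails.mono {F G : Set (TFact A)} (h : G ⊆ F) {β} :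
    Entails Pr Pt G β → Entails Pr Pt F β :=
  Entails.cut (fun _ hγ => Entails.fact (h hγ))

/-- A derivation of a rigid fact only uses rigid facts. -/
lemma Entails.rigid_transfer {F G : Set (TFact A)}
    (h : ∀ q, TFact.rigid q ∈ G → TFact.rigid q ∈ F) :
    ∀ {β}, Entails Pr Pt G β → (∃ p, β = TFact.rigid p) → Entails Pr Pt F β := by
  intro β hβ
  induction hβ with
  | fact hm => rintro ⟨p, rfl⟩; exact Entails.fact (h p hm)
  | rigid hr _ ih =>
      intro _
      exact Entails.rigid hr (fun b hb => ih b hb ⟨b, rfl⟩)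
  | temp t hr hle ht hrb iht ihr =>
      rintro ⟨p, h'⟩; exact nomatch h'

/-- A derivation of a temporal fact at time `< τ` only uses rigid facts and
temporal facts at times `< τ`. -/
lemma Entails.time_transfer {F G : Set (TFact A)} (τ : ℕ)
    (hrig : ∀ q, TFact.rigid q ∈ G → TFact.rigid q ∈ F)
    (htmp : ∀ q s, s < τ → TFact.temporal q s ∈ G → TFact.temporal q s ∈ F) :
    ∀ {β}, Entails Pr Pt G β → (∀ p t, β = TFact.temporal p t → t < τ) →
      Entails Pr Pt F β := by
  intro β hβ
  induction hβ with
  | @fact α hm =>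
      intro hb
      cases α with
      | rigid q => exact Entails.fact (hrig q hm)
      | temporal q s => exact Entails.fact (htmp q s (hb q s rfl) hm)
  | rigid hr _ ih =>
      intro _
      exact Entails.rigid hr (fun b hb => ih b hb (fun p t h => nomatch h))
  | @temp r t hr hle ht hrb iht ihr =>
      intro hb
      have htτ : t < τ := hb _ t rfl
      refine Entails.temp t hr hle ?_ ?_
      · intro q hq
        refine iht q hq (fun p s h => ?_)
        cases h
        exact lt_of_le_of_lt (Nat.sub_le t q.2) htτ
      · exact fun b hb' => ihr b hb' (fun p t h => nomatch h)

end Aux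

/-- Window characterisation of entailment: for a forward-propagating program of
radius at most `ρ`, entailment of a temporal fact at time `τ` from `Π ∪ F`
coincides with entailment from `Π ∪ B ∪ H ∪ U`, where `B` are the rigid facts
of `F`, `H` the temporal facts entailed by `Π ∪ B ∪ F|[0,τ)` with time in
`[τ−ρ, τ)`, and `U = F|τ`. -/
theorem window_entailment_characterisation {A : Type}
    (Pr : Set (RigidRule A)) (Pt : Set (FPRule A)) (ρ : ℕ)
    (hρ : ∀ r ∈ Pt, ∀ p ∈ r.tempBody, p.2 ≤ ρ)
    (F : Set (TFact A)) (a : A) (τ : ℕ) :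
    let B : Set (TFact A) := {f ∈ F | ∃ p : A, f = TFact.rigid p}
    let H : Set (TFact A) := {f : TFact A | ∃ (p : A) (t : ℕ),
      f = TFact.temporal p t ∧ τ - ρ ≤ t ∧ t < τ ∧
      Entails Pr Pt (B ∪ {g ∈ F | ∃ (q : A) (s : ℕ), g = TFact.temporal q s ∧ s < τ}) f}
    let U : Set (TFact A) := {f ∈ F | ∃ p : A, f = TFact.temporal p τ}
    (Entails Pr Pt F (.temporal a τ) ↔ Entails Pr Pt (B ∪ H ∪ U) (.temporal a τ)) := by
  intro B H U
  have hPsub : (B ∪ {g ∈ F | ∃ (q : A) (s : ℕ), g = TFact.temporal q s ∧ s < τ}) ⊆ F := by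
    rintro γ (hγ | hγ) <;> exact hγ.1
  have hBF : ∀ q, TFact.rigid q ∈ F → TFact.rigid q ∈ B ∪ H ∪ U :=
    fun q h => Or.inl (Or.inl ⟨h, q, rfl⟩)
  constructor
  · intro h
    have main : ∀ β, Entails Pr Pt F β →
        ∀ p, β = TFact.temporal p τ → Entails Pr Pt (B ∪ H ∪ U) β := by
      intro β hβ
      induction hβ with
      | @fact α hm => rintro p rfl; exact Entails.fact (Or.inr ⟨hm, p, rfl⟩)
      | rigid hr _ _ => intro p h'; exact nomatch h'
      | @temp r t hr hle ht hrb iht ihr =>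
          rintro p heq
          injection heq with h1 h2
          subst h2
          refine Entails.temp t hr hle ?_ ?_
          · intro q hq
            by_cases h0 : q.2 = 0
            · exact iht q hq q.1 (by simp [h0])
            · have hq1 : 1 ≤ q.2 := Nat.one_le_iff_ne_zero.mpr h0
              have hqt : q.2 ≤ t := hle q hq
              have hlt : t - q.2 < t := Nat.sub_lt (lt_of_lt_of_le hq1 hqt) hq1
              have hE : Entails Pr Pt
                  (B ∪ {g ∈ F | ∃ (q : A) (s : ℕ), g = TFact.temporal q s ∧ s < t})
                  (TFact.temporal q.1 (t - q.2)) := by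
                refine Entails.time_transfer t
                  (fun q h' => Or.inl ⟨h', q, rfl⟩)
                  (fun q s hs h' => Or.inr ⟨h', q, s, rfl, hs⟩)
                  (ht q hq) (fun p s h' => ?_)
                cases h'
                exact hlt
              have hH : TFact.temporal q.1 (t - q.2) ∈ H :=
                ⟨q.1, t - q.2, rfl, Nat.sub_le_sub_left (hρ r hr q hq) t, hlt, hE⟩
              exact Entails.fact (Or.inl (Or.inr hH))
          · exact fun b hb => Entails.rigid_transfer hBF (hrb b hb) ⟨b, rfl⟩
    exact main _ h a rfl
  · intro h
    refine Entails.cut ?_ h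
    rintro γ ((hγ | hγ) | hγ)
    · exact Entails.fact hγ.1
    · obtain ⟨p, t, rfl, _, _, hE⟩ := hγ
      exact Entails.mono hPsub hE
    · exact Entails.fact hγ.1
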